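/- arXiv:2410.04315 — 3 statements merged into one kernel-verified Lean document; each statement's English description precedes it below -/
import Mathlib

section
/- Let (Ω, F, P) be a probability space, X : Ω → 𝒳 a random variable into a measurable space 𝒳, S : Ω → [0,1] a random variable, and Y : Ω → {0,1} a random variable. Assume S and Y are conditionally independent given σ(X), i.e., for all bounded measurable f, g, E[f(S) g(Y) | σ(X)] = E[f(S) | σ(X)] · E[g(Y) | σ(X)] almost surely. Let I ⊆ [0,1] be a measurable set with P(S ∈ I) > 0, and let φ : 𝒳 → [0,1] be measurable with φ(X) a version of E[1{S ∈ I} | σ(X)]. Let ((X_n, Y_n))_{n≥1} be independent pairs each with the same joint law as (X, Y). Then the estimator r̂ = (Σ_{n=1}^N φ(X_n) Y_n) / (Σ_{n=1}^N φ(X_n)) converges in probability, as N → ∞, to the conditional expectation E[Y | S ∈ I] = E[Y · 1{S ∈ I}] / P(S ∈ I). -/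
open MeasureTheory ProbabilityTheory Filter
open scoped Topology

theorem consistency_r_hat_aux
    {Ω : Type*} (m : MeasurableSpace Ω) [mΩ : MeasurableSpace Ω] (hm : m ≤ mΩ)
    (P : Measure Ω) [IsProbabilityMeasure P]
    {𝒳 : Type*} [MeasurableSpace 𝒳]
    (X : Ω → 𝒳) (hX : Measurable X)
    (S : Ω → ℝ) (hS : Measurable S) (hS01 : ∀ ω, S ω ∈ Set.Icc (0 : ℝ) 1)
    (Y : Ω → ℝ) (hY : Measurable Y) (hY01 : ∀ ω, Y ω = 0 ∨ Y ω = 1)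
    (hCI : ∀ f g : ℝ → ℝ, Measurable f → Measurable g →
      (∃ C, ∀ x, |f x| ≤ C) → (∃ C, ∀ x, |g x| ≤ C) →
      P[fun ω => f (S ω) * g (Y ω) | m] =ᵐ[P]
        fun ω => (P[fun ω' => f (S ω') | m]) ω *
          (P[fun ω' => g (Y ω') | m]) ω)
    (I : Set ℝ) (hI : MeasurableSet I) (hIpos : 0 < P (S ⁻¹' I))
    (φ : 𝒳 → ℝ) (hφ : Measurable φ) (hφ01 : ∀ x, φ x ∈ Set.Icc (0 : ℝ) 1)
    (hmX : Measurable[m] fun ω => φ (X ω))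
    (hver : (fun ω => φ (X ω)) =ᵐ[P]
      P[(S ⁻¹' I).indicator (fun _ => (1 : ℝ)) | m])
    (Xs : ℕ → Ω → 𝒳) (Ys : ℕ → Ω → ℝ)
    (hXs : ∀ n, Measurable (Xs n)) (hYs : ∀ n, Measurable (Ys n))
    (hindep : iIndepFun (fun n ω => (Xs n ω, Ys n ω)) P)
    (hident : ∀ n, Measure.map (fun ω => (Xs n ω, Ys n ω)) P
      = Measure.map (fun ω => (X ω, Y ω)) P) :
    TendstoInMeasure P
      (fun N ω => (∑ n ∈ Finset.range N, φ (Xs n ω) * Ys n ω) /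
        (∑ n ∈ Finset.range N, φ (Xs n ω)))
      atTop
      (fun _ => (∫ ω, Y ω * (S ⁻¹' I).indicator (fun _ => (1 : ℝ)) ω ∂P) /
        (P (S ⁻¹' I)).toReal) := by
  
  classical
  have intbdd : ∀ (f : Ω → ℝ), AEStronglyMeasurable f P → (∀ᵐ ω ∂P, |f ω| ≤ 1) →
      Integrable f P := fun f hf hb =>
    Integrable.mono' (integrable_const 1) hf (by simpa [Real.norm_eq_abs] using hb)
  set ind : Ω → ℝ := (S ⁻¹' I).indicator (fun _ => (1 : ℝ)) with hind_def
  have hSI : MeasurableSet (S ⁻¹' I) := hS hI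
  have hind_meas : Measurable ind := measurable_const.indicator hSI
  have hind_bd : ∀ ω, |ind ω| ≤ 1 := by
    intro ω; by_cases h : ω ∈ S ⁻¹' I <;> simp [hind_def, Set.indicator_apply, h]
  have hind_int : Integrable ind P :=
    intbdd _ hind_meas.aestronglyMeasurable (Filter.Eventually.of_forall hind_bd)
  have hφX_measM : Measurable[m] fun ω => φ (X ω) := hmX
  have hφX_meas : Measurable fun ω => φ (X ω) := hφ.comp hX
  have hφX_bd : ∀ ω, |φ (X ω)| ≤ 1 := fun ω =>
    abs_le.2 ⟨by linarith [(hφ01 (X ω)).1], (hφ01 (X ω)).2⟩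
  have hY_bd : ∀ ω, |Y ω| ≤ 1 := fun ω => by rcases hY01 ω with h | h <;> simp [h]
  have hY_int : Integrable Y P :=
    intbdd _ hY.aestronglyMeasurable (Filter.Eventually.of_forall hY_bd)
  have hφY_int : Integrable (fun ω => φ (X ω) * Y ω) P := by
    refine intbdd _ (hφX_meas.mul hY).aestronglyMeasurable (Filter.Eventually.of_forall fun ω => ?_)
    calc |φ (X ω) * Y ω| = |φ (X ω)| * |Y ω| := abs_mul _ _
      _ ≤ 1 * 1 := mul_le_mul (hφX_bd ω) (hY_bd ω) (abs_nonneg _) zero_le_one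
      _ = 1 := one_mul 1
  -- denominator mean
  have hb_eq : ∫ ω, φ (X ω) ∂P = (P (S ⁻¹' I)).toReal := by
    rw [integral_congr_ae hver, integral_condExp hm]
    exact integral_indicator_one hSI
  have hbpos : 0 < (P (S ⁻¹' I)).toReal := ENNReal.toReal_pos hIpos.ne' (measure_ne_top _ _)
  -- numerator mean, via conditional independence
  have ha_eq : ∫ ω, φ (X ω) * Y ω ∂P = ∫ ω, Y ω * ind ω ∂P := by
    set f : ℝ → ℝ := I.indicator (fun _ => (1 : ℝ)) with hf_def
    set g : ℝ → ℝ := fun y => min (max y 0) 1 with hg_def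
    have hf : Measurable f := measurable_const.indicator hI
    have hg : Measurable g := (measurable_id.max measurable_const).min measurable_const
    have hfb : ∃ C, ∀ x, |f x| ≤ C :=
      ⟨1, fun x => by by_cases h : x ∈ I <;> simp [hf_def, Set.indicator_apply, h]⟩
    have hgb : ∃ C, ∀ x, |g x| ≤ C := by
      refine ⟨1, fun x => abs_le.2 ⟨?_, min_le_right _ _⟩⟩
      have : (0 : ℝ) ≤ min (max x 0) 1 := le_min (le_max_right _ _) zero_le_one
      linarith
    have hfS : (fun ω => f (S ω)) = ind := by
      funext ω
      simp [hf_def, hind_def, Set.indicator_apply, Set.mem_preimage]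
    have hgY : (fun ω => g (Y ω)) = Y := by
      funext ω; rcases hY01 ω with h | h <;> simp [hg_def, h]
    have hfgS : (fun ω => f (S ω) * g (Y ω)) = fun ω => ind ω * Y ω := by
      funext ω
      rw [show f (S ω) = ind ω from congrFun hfS ω, show g (Y ω) = Y ω from congrFun hgY ω]
    have hCI' := hCI f g hf hg hfb hgb
    rw [hfgS, hfS, hgY] at hCI'
    have step1 : ∫ ω, Y ω * ind ω ∂P = ∫ ω, ind ω * Y ω ∂P := by simp_rw [mul_comm]
    have hindY_int : Integrable (fun ω => ind ω * Y ω) P := by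
      refine intbdd _ (hind_meas.mul hY).aestronglyMeasurable
        (Filter.Eventually.of_forall fun ω => ?_)
      calc |ind ω * Y ω| = |ind ω| * |Y ω| := abs_mul _ _
        _ ≤ 1 * 1 := mul_le_mul (hind_bd ω) (hY_bd ω) (abs_nonneg _) zero_le_one
        _ = 1 := one_mul 1
    have step2 : ∫ ω, ind ω * Y ω ∂P = ∫ ω, (P[fun ω' => ind ω' * Y ω' | m]) ω ∂P :=
      (integral_condExp hm).symm
    have step3 : ∫ ω, (P[fun ω' => ind ω' * Y ω' | m]) ω ∂P
        = ∫ ω, φ (X ω) * (P[Y | m]) ω ∂P := by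
      refine integral_congr_ae (hCI'.trans ?_)
      filter_upwards [hver] with ω hω
      rw [hω]
    have hφXsm : StronglyMeasurable[m] fun ω => φ (X ω) := hφX_measM.stronglyMeasurable
    have step4 : ∫ ω, φ (X ω) * (P[Y | m]) ω ∂P = ∫ ω, φ (X ω) * Y ω ∂P := by
      have hmul := condExp_mul_of_stronglyMeasurable_left (μ := P) (m := m) hφXsm
        (by exact hφY_int) hY_int
      calc ∫ ω, φ (X ω) * (P[Y | m]) ω ∂P
          = ∫ ω, (P[(fun ω' => φ (X ω')) * Y | m]) ω ∂P := (integral_congr_ae hmul).symm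
        _ = ∫ ω, ((fun ω' => φ (X ω')) * Y) ω ∂P := integral_condExp hm
        _ = ∫ ω, φ (X ω) * Y ω ∂P := rfl
    rw [step1, step2, step3, step4]
  -- the i.i.d. samples
  have hpair_meas : ∀ n, Measurable fun ω => (Xs n ω, Ys n ω) := fun n =>
    (hXs n).prodMk (hYs n)
  have hpid : ∀ n, IdentDistrib (fun ω => (Xs n ω, Ys n ω)) (fun ω => (X ω, Y ω)) P P :=
    fun n => ⟨(hpair_meas n).aemeasurable, (hX.prodMk hY).aemeasurable, hident n⟩
  have hWm : Measurable fun p : 𝒳 × ℝ => φ p.1 * p.2 :=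
    (hφ.comp measurable_fst).mul measurable_snd
  have hVm : Measurable fun p : 𝒳 × ℝ => φ p.1 := hφ.comp measurable_fst
  set W : ℕ → Ω → ℝ := fun n ω => φ (Xs n ω) * Ys n ω with hW_def
  set V : ℕ → Ω → ℝ := fun n ω => φ (Xs n ω) with hV_def
  have hYs01 : ∀ n, ∀ᵐ ω ∂P, Ys n ω = 0 ∨ Ys n ω = 1 := by
    intro n
    have hsm : MeasurableSet ((Set.univ : Set 𝒳) ×ˢ ({0, 1} : Set ℝ)) :=
      MeasurableSet.univ.prod ((measurableSet_singleton (1:ℝ)).insert 0)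
    have h1 := (hpid n).measure_mem_eq hsm
    have h2 : P ((fun ω => (X ω, Y ω)) ⁻¹' (Set.univ : Set 𝒳) ×ˢ ({0, 1} : Set ℝ)) = 1 := by
      have : ((fun ω => (X ω, Y ω)) ⁻¹' (Set.univ : Set 𝒳) ×ˢ ({0, 1} : Set ℝ)) = Set.univ := by
        ext ω; simpa using hY01 ω
      rw [this]; exact measure_univ
    have h3 : P ((fun ω => (Xs n ω, Ys n ω)) ⁻¹' (Set.univ : Set 𝒳) ×ˢ ({0, 1} : Set ℝ)) = 1 :=
      h1.trans h2
    have h4 : P (((fun ω => (Xs n ω, Ys n ω)) ⁻¹' (Set.univ : Set 𝒳) ×ˢ ({0, 1} : Set ℝ))ᶜ) = 0 :=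
      (prob_compl_eq_zero_iff ((hpair_meas n) hsm)).2 h3
    rw [ae_iff]
    convert h4 using 2
    ext ω
    simp [Set.mem_prod]
  have hW_int : Integrable (W 0) P := by
    refine intbdd _ ((hφ.comp (hXs 0)).mul (hYs 0)).aestronglyMeasurable ?_
    filter_upwards [hYs01 0] with ω hω
    have hYb : |Ys 0 ω| ≤ 1 := by rcases hω with h | h <;> simp [h]
    calc |φ (Xs 0 ω) * Ys 0 ω| = |φ (Xs 0 ω)| * |Ys 0 ω| := abs_mul _ _
      _ ≤ 1 * 1 := mul_le_mul
          (abs_le.2 ⟨by linarith [(hφ01 (Xs 0 ω)).1], (hφ01 (Xs 0 ω)).2⟩) hYb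
          (abs_nonneg _) zero_le_one
      _ = 1 := one_mul 1
  have hV_int : Integrable (V 0) P := by
    refine intbdd _ (hφ.comp (hXs 0)).aestronglyMeasurable
      (Filter.Eventually.of_forall fun ω => ?_)
    exact abs_le.2 ⟨by linarith [(hφ01 (Xs 0 ω)).1], (hφ01 (Xs 0 ω)).2⟩
  have hW_indep : Pairwise (Function.onFun (IndepFun · · P) W) := fun i j hij =>
    (hindep.indepFun hij).comp hWm hWm
  have hV_indep : Pairwise (Function.onFun (IndepFun · · P) V) := fun i j hij =>
    (hindep.indepFun hij).comp hVm hVm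
  have hW_ident : ∀ i, IdentDistrib (W i) (W 0) P P := fun i =>
    ((hpid i).trans (hpid 0).symm).comp hWm
  have hV_ident : ∀ i, IdentDistrib (V i) (V 0) P P := fun i =>
    ((hpid i).trans (hpid 0).symm).comp hVm
  have hEW : P[W 0] = ∫ ω, φ (X ω) * Y ω ∂P := by
    have e1 : P[W 0] = ∫ p, φ p.1 * p.2 ∂(Measure.map (fun ω => (Xs 0 ω, Ys 0 ω)) P) :=
      (integral_map (hpair_meas 0).aemeasurable hWm.aestronglyMeasurable).symm
    rw [e1, hident 0, integral_map (hX.prodMk hY).aemeasurable hWm.aestronglyMeasurable]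
  have hEV : P[V 0] = (P (S ⁻¹' I)).toReal := by
    have e1 : P[V 0] = ∫ p : 𝒳 × ℝ, φ p.1 ∂(Measure.map (fun ω => (Xs 0 ω, Ys 0 ω)) P) :=
      (integral_map (hpair_meas 0).aemeasurable hVm.aestronglyMeasurable).symm
    rw [e1, hident 0, integral_map (hX.prodMk hY).aemeasurable hVm.aestronglyMeasurable]
    exact hb_eq
  have hA := strong_law_ae_real W hW_int hW_indep hW_ident
  have hB := strong_law_ae_real V hV_int hV_indep hV_ident
  rw [hEW, ha_eq] at hA
  rw [hEV] at hB
  have hae : ∀ᵐ ω ∂P, Tendsto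
      (fun N => (∑ n ∈ Finset.range N, φ (Xs n ω) * Ys n ω) /
        (∑ n ∈ Finset.range N, φ (Xs n ω))) atTop
      (𝓝 ((∫ ω, Y ω * ind ω ∂P) / (P (S ⁻¹' I)).toReal)) := by
    filter_upwards [hA, hB] with ω hAω hBω
    have hquot := hAω.div hBω hbpos.ne'
    refine Filter.Tendsto.congr' ?_ hquot
    filter_upwards [eventually_ge_atTop 1] with N hN
    have hN0 : (N : ℝ) ≠ 0 := by
      simp only [ne_eq, Nat.cast_eq_zero]
      omega
    exact div_div_div_cancel_right₀ hN0 _ _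
  have hmeasN : ∀ N, AEStronglyMeasurable
      (fun ω => (∑ n ∈ Finset.range N, φ (Xs n ω) * Ys n ω) /
        (∑ n ∈ Finset.range N, φ (Xs n ω))) P := by
    intro N
    exact ((Finset.measurable_sum _ fun n _ => (hφ.comp (hXs n)).mul (hYs n)).div
      (Finset.measurable_sum _ fun n _ => hφ.comp (hXs n))).aestronglyMeasurable
  exact tendstoInMeasure_of_tendsto_ae hmeasN hae

/-- Consistency of the per-bin calibration-function estimator `r̂`:
under conditional independence of `S` and `Y` given `σ(X)`, if `φ(X)` is a version of
`E[1{S ∈ I} | σ(X)]` and `((X_n, Y_n))` are i.i.d. with the law of `(X, Y)`, then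
`(∑ φ(X_n) Y_n) / (∑ φ(X_n))` converges in probability to
`E[Y | S ∈ I] = E[Y · 1{S ∈ I}] / P(S ∈ I)`. -/
theorem consistency_r_hat
    {Ω : Type*} [MeasurableSpace Ω] (P : Measure Ω) [IsProbabilityMeasure P]
    {𝒳 : Type*} [MeasurableSpace 𝒳]
    (X : Ω → 𝒳) (hX : Measurable X)
    (S : Ω → ℝ) (hS : Measurable S) (hS01 : ∀ ω, S ω ∈ Set.Icc (0 : ℝ) 1)
    (Y : Ω → ℝ) (hY : Measurable Y) (hY01 : ∀ ω, Y ω = 0 ∨ Y ω = 1)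
    (hCI : ∀ f g : ℝ → ℝ, Measurable f → Measurable g →
      (∃ C, ∀ x, |f x| ≤ C) → (∃ C, ∀ x, |g x| ≤ C) →
      P[fun ω => f (S ω) * g (Y ω) | MeasurableSpace.comap X inferInstance] =ᵐ[P]
        fun ω => (P[fun ω' => f (S ω') | MeasurableSpace.comap X inferInstance]) ω *
          (P[fun ω' => g (Y ω') | MeasurableSpace.comap X inferInstance]) ω)
    (I : Set ℝ) (hI : MeasurableSet I) (hIpos : 0 < P (S ⁻¹' I))
    (φ : 𝒳 → ℝ) (hφ : Measurable φ) (hφ01 : ∀ x, φ x ∈ Set.Icc (0 : ℝ) 1)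
    (hver : (fun ω => φ (X ω)) =ᵐ[P]
      P[(S ⁻¹' I).indicator (fun _ => (1 : ℝ)) | MeasurableSpace.comap X inferInstance])
    (Xs : ℕ → Ω → 𝒳) (Ys : ℕ → Ω → ℝ)
    (hXs : ∀ n, Measurable (Xs n)) (hYs : ∀ n, Measurable (Ys n))
    (hindep : iIndepFun (fun n ω => (Xs n ω, Ys n ω)) P)
    (hident : ∀ n, Measure.map (fun ω => (Xs n ω, Ys n ω)) P
      = Measure.map (fun ω => (X ω, Y ω)) P) :
    TendstoInMeasure P
      (fun N ω => (∑ n ∈ Finset.range N, φ (Xs n ω) * Ys n ω) /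
        (∑ n ∈ Finset.range N, φ (Xs n ω)))
      atTop
      (fun _ => (∫ ω, Y ω * (S ⁻¹' I).indicator (fun _ => (1 : ℝ)) ω ∂P) /
        (P (S ⁻¹' I)).toReal) := by
  exact consistency_r_hat_aux (MeasurableSpace.comap X inferInstance) hX.comap_le P X hX S hS
    hS01 Y hY hY01 hCI I hI hIpos φ hφ hφ01 (hφ.comp (Measurable.of_comap_le le_rfl))
    hver Xs Ys hXs hYs hindep hident
end

section
/- Let (Ω, F, P) be a probability space, X : Ω → 𝒳 a random variable into a measurable space 𝒳, and S : Ω → [0,1] a random variable. Let I ⊆ [0,1] be a measurable set with P(S ∈ I) > 0. Let φ, ψ : 𝒳 → [0,1] be measurable functions such that φ(X) is a version of E[1{S ∈ I} | σ(X)] and ψ(X) is a version of E[S · 1{S ∈ I} | σ(X)]. Let (X_n)_{n≥1} be independent random variables each with the law of X. Then the estimator ĝ = (Σ_{n=1}^N ψ(X_n)) / (Σ_{n=1}^N φ(X_n)) converges in probability, as N → ∞, to E[S | S ∈ I] = E[S · 1{S ∈ I}] / P(S ∈ I). -/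
open MeasureTheory ProbabilityTheory Filter Topology

/-- Consistency of the per-bin mean-prediction estimator `ĝ`:
if `φ(X)` is a version of `E[1{S ∈ I} | σ(X)]` and `ψ(X)` is a version of
`E[S · 1{S ∈ I} | σ(X)]`, and `(X_n)` are i.i.d. with the law of `X`, then
`(∑ ψ(X_n)) / (∑ φ(X_n))` converges in probability to
`E[S | S ∈ I] = E[S · 1{S ∈ I}] / P(S ∈ I)`. -/
theorem consistency_g_hat
    {Ω : Type*} [MeasurableSpace Ω] (P : Measure Ω) [IsProbabilityMeasure P]
    {𝒳 : Type*} [MeasurableSpace 𝒳]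
    (X : Ω → 𝒳) (hX : Measurable X)
    (S : Ω → ℝ) (hS : Measurable S) (hS01 : ∀ ω, S ω ∈ Set.Icc (0 : ℝ) 1)
    (I : Set ℝ) (hI : MeasurableSet I) (hIpos : 0 < P (S ⁻¹' I))
    (φ : 𝒳 → ℝ) (hφ : Measurable φ) (hφ01 : ∀ x, φ x ∈ Set.Icc (0 : ℝ) 1)
    (ψ : 𝒳 → ℝ) (hψ : Measurable ψ) (hψ01 : ∀ x, ψ x ∈ Set.Icc (0 : ℝ) 1)
    (hverφ : (fun ω => φ (X ω)) =ᵐ[P]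
      P[(S ⁻¹' I).indicator (fun _ => (1 : ℝ)) | MeasurableSpace.comap X inferInstance])
    (hverψ : (fun ω => ψ (X ω)) =ᵐ[P]
      P[fun ω => S ω * (S ⁻¹' I).indicator (fun _ => (1 : ℝ)) ω |
        MeasurableSpace.comap X inferInstance])
    (Xs : ℕ → Ω → 𝒳) (hXs : ∀ n, Measurable (Xs n))
    (hindep : iIndepFun Xs P)
    (hident : ∀ n, Measure.map (Xs n) P = Measure.map X P) :
    TendstoInMeasure P
      (fun N ω => (∑ n ∈ Finset.range N, ψ (Xs n ω)) /
        (∑ n ∈ Finset.range N, φ (Xs n ω)))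
      atTop
      (fun _ => (∫ ω, S ω * (S ⁻¹' I).indicator (fun _ => (1 : ℝ)) ω ∂P) /
        (P (S ⁻¹' I)).toReal) := by
  classical
  have hm : MeasurableSpace.comap X inferInstance ≤ ‹MeasurableSpace Ω› := hX.comap_le
  have hSI : MeasurableSet (S ⁻¹' I) := hS hI
  -- integrability of a [0,1]-valued measurable function composed with Xs n
  have hint : ∀ (g : 𝒳 → ℝ), Measurable g → (∀ x, g x ∈ Set.Icc (0:ℝ) 1) →
      ∀ n, Integrable (fun ω => g (Xs n ω)) P := by
    intro g hg hg01 n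
    refine Integrable.mono' (integrable_const 1) ((hg.comp (hXs n)).aestronglyMeasurable) ?_
    filter_upwards with ω
    rw [Real.norm_eq_abs, abs_le]
    exact ⟨by linarith [(hg01 (Xs n ω)).1], (hg01 (Xs n ω)).2⟩
  -- expectations via the tower property
  have hEφ : ∫ ω, φ (X ω) ∂P = (P (S ⁻¹' I)).toReal := by
    rw [integral_congr_ae hverφ, integral_condExp hm, integral_indicator hSI]
    simp [Measure.real]
  have hEψ : ∫ ω, ψ (X ω) ∂P
      = ∫ ω, S ω * (S ⁻¹' I).indicator (fun _ => (1:ℝ)) ω ∂P := by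
    rw [integral_congr_ae hverψ, integral_condExp hm]
  -- the X_n have the same law as X
  have hmap : ∀ (g : 𝒳 → ℝ), Measurable g → ∀ n,
      ∫ ω, g (Xs n ω) ∂P = ∫ ω, g (X ω) ∂P := by
    intro g hg n
    rw [← integral_map (hXs n).aemeasurable hg.aestronglyMeasurable, hident n,
      integral_map hX.aemeasurable hg.aestronglyMeasurable]
  -- strong law of large numbers
  have hlln : ∀ (g : 𝒳 → ℝ), Measurable g → (∀ x, g x ∈ Set.Icc (0:ℝ) 1) →
      ∀ᵐ ω ∂P, Tendsto (fun N : ℕ => (∑ n ∈ Finset.range N, g (Xs n ω)) / N) atTop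
        (𝓝 (∫ ω, g (X ω) ∂P)) := by
    intro g hg hg01
    have h := strong_law_ae_real (fun n ω => g (Xs n ω)) (hint g hg hg01 0)
      (fun i j hij => (hindep.indepFun hij).comp hg hg)
      (fun i => IdentDistrib.comp
        ⟨(hXs i).aemeasurable, (hXs 0).aemeasurable, by rw [hident i, hident 0]⟩ hg)
    have heq : P[fun ω => g (Xs 0 ω)] = ∫ ω, g (X ω) ∂P := hmap g hg 0
    rw [heq] at h
    exact h
  have hcpos : (0:ℝ) < (P (S ⁻¹' I)).toReal :=
    ENNReal.toReal_pos hIpos.ne' (measure_ne_top P _)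
  have hae : ∀ᵐ ω ∂P, Tendsto (fun N : ℕ => (∑ n ∈ Finset.range N, ψ (Xs n ω)) /
      (∑ n ∈ Finset.range N, φ (Xs n ω))) atTop
      (𝓝 ((∫ ω, S ω * (S ⁻¹' I).indicator (fun _ => (1:ℝ)) ω ∂P) /
        (P (S ⁻¹' I)).toReal)) := by
    filter_upwards [hlln φ hφ hφ01, hlln ψ hψ hψ01] with ω hφω hψω
    rw [hEφ] at hφω
    rw [hEψ] at hψω
    have h := hψω.div hφω hcpos.ne'
    refine Tendsto.congr' ?_ h
    filter_upwards [eventually_ge_atTop 1] with N hN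
    have hN0 : (N:ℝ) ≠ 0 := Nat.cast_ne_zero.mpr (by omega)
    rcases eq_or_ne (∑ n ∈ Finset.range N, φ (Xs n ω)) 0 with h0 | h0
    · simp [h0]
    · rw [Pi.div_apply]; field_simp
  refine tendstoInMeasure_of_tendsto_ae (fun N => ?_) hae
  exact ((Finset.measurable_sum _ (fun n _ => hψ.comp (hXs n))).div
    (Finset.measurable_sum _ (fun n _ => hφ.comp (hXs n)))).aestronglyMeasurable
end

section
/- Let (Ω, F, P) be a probability space, X : Ω → 𝒳 a random variable into a measurable space 𝒳, S : Ω → [0,1] a random variable, and C : Ω → [0,1] a random variable, and set Y = 1{C ≥ 1/2}. Assume S and C are conditionally independent given σ(X), i.e., for all bounded measurable f, g, E[f(S) g(C) | σ(X)] = E[f(S) | σ(X)] · E[g(C) | σ(X)] almost surely. Let I ⊆ [0,1] be a measurable set with P(S ∈ I) > 0. Let φ, χ : 𝒳 → [0,1] be measurable functions with φ(X) a version of E[1{S ∈ I} | σ(X)] and χ(X) a version of E[1{C ≥ 1/2} | σ(X)]. Let (X_n)_{n≥1} be independent random variables each with the law of X. Then the modified estimator r̂ = (Σ_{n=1}^N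 φ(X_n) χ(X_n)) / (Σ_{n=1}^N φ(X_n)) converges in probability, as N → ∞, to E[Y | S ∈ I] = E[1{C ≥ 1/2} · 1{S ∈ I}] / P(S ∈ I). -/
open MeasureTheory ProbabilityTheory Filter Topology

lemma aux_ind_abs_le_one {α : Type*} (s : Set α) (x : α) :
    |s.indicator (fun _ => (1 : ℝ)) x| ≤ 1 := by
  by_cases h : x ∈ s
  · simp [Set.indicator_of_mem h]
  · simp [Set.indicator_of_notMem h]

lemma aux_ind_comp {α β : Type*} (f : α → β) (s : Set β) (x : α) :
    s.indicator (fun _ => (1 : ℝ)) (f x) = (f ⁻¹' s).indicator (fun _ => (1 : ℝ)) x := by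
  by_cases h : f x ∈ s
  · rw [Set.indicator_of_mem h, Set.indicator_of_mem (show x ∈ f ⁻¹' s from h)]
  · rw [Set.indicator_of_notMem h, Set.indicator_of_notMem (show x ∉ f ⁻¹' s from h)]

/-- Consistency of the calibration-function estimator under uncertain labels:
with `Y = 1{C ≥ 1/2}`, `S` and `C` conditionally independent given `σ(X)`,
`φ(X)` a version of `E[1{S ∈ I} | σ(X)]` and `χ(X)` a version of
`E[1{C ≥ 1/2} | σ(X)]`, and `(X_n)` i.i.d. with the law of `X`, the estimator
`(∑ φ(X_n) χ(X_n)) / (∑ φ(X_n))` converges in probability to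
`E[Y | S ∈ I] = E[1{C ≥ 1/2} · 1{S ∈ I}] / P(S ∈ I)`. -/
theorem consistency_r_hat_uncertain_labels
    {Ω : Type*} [MeasurableSpace Ω] (P : Measure Ω) [IsProbabilityMeasure P]
    {𝒳 : Type*} [MeasurableSpace 𝒳]
    (X : Ω → 𝒳) (hX : Measurable X)
    (S : Ω → ℝ) (hS : Measurable S) (hS01 : ∀ ω, S ω ∈ Set.Icc (0 : ℝ) 1)
    (C : Ω → ℝ) (hC : Measurable C) (hC01 : ∀ ω, C ω ∈ Set.Icc (0 : ℝ) 1)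
    (hCI : ∀ f g : ℝ → ℝ, Measurable f → Measurable g →
      (∃ D, ∀ x, |f x| ≤ D) → (∃ D, ∀ x, |g x| ≤ D) →
      P[fun ω => f (S ω) * g (C ω) | MeasurableSpace.comap X inferInstance] =ᵐ[P]
        fun ω => (P[fun ω' => f (S ω') | MeasurableSpace.comap X inferInstance]) ω *
          (P[fun ω' => g (C ω') | MeasurableSpace.comap X inferInstance]) ω)
    (I : Set ℝ) (hI : MeasurableSet I) (hIpos : 0 < P (S ⁻¹' I))
    (φ : 𝒳 → ℝ) (hφ : Measurable φ) (hφ01 : ∀ x, φ x ∈ Set.Icc (0 : ℝ) 1)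
    (χ : 𝒳 → ℝ) (hχ : Measurable χ) (hχ01 : ∀ x, χ x ∈ Set.Icc (0 : ℝ) 1)
    (hverφ : (fun ω => φ (X ω)) =ᵐ[P]
      P[(S ⁻¹' I).indicator (fun _ => (1 : ℝ)) | MeasurableSpace.comap X inferInstance])
    (hverχ : (fun ω => χ (X ω)) =ᵐ[P]
      P[{ω | (1 : ℝ) / 2 ≤ C ω}.indicator (fun _ => (1 : ℝ)) |
        MeasurableSpace.comap X inferInstance])
    (Xs : ℕ → Ω → 𝒳) (hXs : ∀ n, Measurable (Xs n))
    (hindep : iIndepFun Xs P)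
    (hident : ∀ n, Measure.map (Xs n) P = Measure.map X P) :
    TendstoInMeasure P
      (fun N ω => (∑ n ∈ Finset.range N, φ (Xs n ω) * χ (Xs n ω)) /
        (∑ n ∈ Finset.range N, φ (Xs n ω)))
      atTop
      (fun _ => (∫ ω, {ω' | (1 : ℝ) / 2 ≤ C ω'}.indicator (fun _ => (1 : ℝ)) ω *
          (S ⁻¹' I).indicator (fun _ => (1 : ℝ)) ω ∂P) /
        (P (S ⁻¹' I)).toReal) := by
  classical
  have hm : MeasurableSpace.comap X inferInstance ≤ _ := hX.comap_le
  have hSI : MeasurableSet (S ⁻¹' I) := hS hI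
  have hCset : MeasurableSet {ω | (1 : ℝ) / 2 ≤ C ω} := hC measurableSet_Ici
  -- product conditional expectation
  have hprod : (fun ω => φ (X ω) * χ (X ω)) =ᵐ[P]
      P[fun ω => (S ⁻¹' I).indicator (fun _ => (1 : ℝ)) ω *
        {ω' | (1 : ℝ) / 2 ≤ C ω'}.indicator (fun _ => (1 : ℝ)) ω |
        MeasurableSpace.comap X inferInstance] := by
    have key := hCI (I.indicator (fun _ => (1 : ℝ)))
      ((Set.Ici ((1 : ℝ) / 2)).indicator (fun _ => (1 : ℝ)))
      (measurable_const.indicator hI) (measurable_const.indicator measurableSet_Ici)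
      ⟨1, fun x => aux_ind_abs_le_one _ _⟩ ⟨1, fun x => aux_ind_abs_le_one _ _⟩
    have h1 : ∀ ω : Ω, (I.indicator (fun _ => (1 : ℝ))) (S ω) =
        (S ⁻¹' I).indicator (fun _ => (1 : ℝ)) ω := fun ω => aux_ind_comp S I ω
    have h2 : ∀ ω : Ω, ((Set.Ici ((1 : ℝ) / 2)).indicator (fun _ => (1 : ℝ))) (C ω) =
        {ω' | (1 : ℝ) / 2 ≤ C ω'}.indicator (fun _ => (1 : ℝ)) ω :=
      fun ω => aux_ind_comp C (Set.Ici ((1 : ℝ) / 2)) ω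
    simp only [h1, h2] at key
    exact (hverφ.mul hverχ).trans key.symm
  have hIntProd : Integrable (fun ω => (S ⁻¹' I).indicator (fun _ => (1 : ℝ)) ω *
      {ω' | (1 : ℝ) / 2 ≤ C ω'}.indicator (fun _ => (1 : ℝ)) ω) P := by
    refine (integrable_const (1 : ℝ)).mono' ?_ ?_
    · exact ((measurable_const.indicator hSI).mul
        (measurable_const.indicator hCset)).aestronglyMeasurable
    · refine Filter.Eventually.of_forall fun ω => ?_
      calc ‖(S ⁻¹' I).indicator (fun _ => (1 : ℝ)) ω *
            {ω' | (1 : ℝ) / 2 ≤ C ω'}.indicator (fun _ => (1 : ℝ)) ω‖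
          = |(S ⁻¹' I).indicator (fun _ => (1 : ℝ)) ω| *
            |{ω' | (1 : ℝ) / 2 ≤ C ω'}.indicator (fun _ => (1 : ℝ)) ω| := abs_mul _ _
        _ ≤ 1 * 1 := mul_le_mul (aux_ind_abs_le_one _ _) (aux_ind_abs_le_one _ _)
            (abs_nonneg _) zero_le_one
        _ = 1 := one_mul 1
  -- mean of φ(X)
  have hEφ : ∫ ω, φ (X ω) ∂P = (P (S ⁻¹' I)).toReal := by
    rw [integral_congr_ae hverφ, integral_condExp hm]
    exact integral_indicator_one hSI
  -- mean of φ(X)χ(X)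
  have hEφχ : ∫ ω, φ (X ω) * χ (X ω) ∂P =
      ∫ ω, {ω' | (1 : ℝ) / 2 ≤ C ω'}.indicator (fun _ => (1 : ℝ)) ω *
        (S ⁻¹' I).indicator (fun _ => (1 : ℝ)) ω ∂P := by
    rw [integral_congr_ae hprod, integral_condExp hm]
    exact integral_congr_ae (Filter.Eventually.of_forall fun ω => mul_comm _ _)
  -- iid setup
  have hid : ∀ n, IdentDistrib (Xs n) X P P :=
    fun n => ⟨(hXs n).aemeasurable, hX.aemeasurable, hident n⟩
  have hmu1 : Measurable (fun x => φ x * χ x) := hφ.mul hχ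
  have hbound1 : ∀ x, ‖φ x * χ x‖ ≤ 1 := fun x => by
    have h1 := hφ01 x; have h2 := hχ01 x
    rw [Real.norm_eq_abs, abs_mul, abs_of_nonneg h1.1, abs_of_nonneg h2.1]
    calc φ x * χ x ≤ 1 * 1 := mul_le_mul h1.2 h2.2 h2.1 zero_le_one
      _ = 1 := one_mul 1
  have hbound2 : ∀ x, ‖φ x‖ ≤ 1 := fun x => by
    have h1 := hφ01 x
    rw [Real.norm_eq_abs, abs_of_nonneg h1.1]; exact h1.2
  have hint1 : Integrable (fun ω => φ (Xs 0 ω) * χ (Xs 0 ω)) P :=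
    (integrable_const (1 : ℝ)).mono' (hmu1.comp (hXs 0)).aestronglyMeasurable
      (Filter.Eventually.of_forall fun ω => hbound1 _)
  have hint2 : Integrable (fun ω => φ (Xs 0 ω)) P :=
    (integrable_const (1 : ℝ)).mono' (hφ.comp (hXs 0)).aestronglyMeasurable
      (Filter.Eventually.of_forall fun ω => hbound2 _)
  have hpair1 : Pairwise (Function.onFun (IndepFun · · P) fun n ω => φ (Xs n ω) * χ (Xs n ω)) :=
    fun i j hij => (hindep.indepFun hij).comp hmu1 hmu1
  have hpair2 : Pairwise (Function.onFun (IndepFun · · P) fun n ω => φ (Xs n ω)) :=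
    fun i j hij => (hindep.indepFun hij).comp hφ hφ
  have hid1 : ∀ i, IdentDistrib (fun ω => φ (Xs i ω) * χ (Xs i ω))
      (fun ω => φ (Xs 0 ω) * χ (Xs 0 ω)) P P :=
    fun i => ((hid i).trans (hid 0).symm).comp hmu1
  have hid2 : ∀ i, IdentDistrib (fun ω => φ (Xs i ω)) (fun ω => φ (Xs 0 ω)) P P :=
    fun i => ((hid i).trans (hid 0).symm).comp hφ
  have hE1 : ∫ ω, φ (Xs 0 ω) * χ (Xs 0 ω) ∂P =
      ∫ ω, {ω' | (1 : ℝ) / 2 ≤ C ω'}.indicator (fun _ => (1 : ℝ)) ω *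
        (S ⁻¹' I).indicator (fun _ => (1 : ℝ)) ω ∂P :=
    (((hid 0).comp hmu1).integral_eq).trans hEφχ
  have hE2 : ∫ ω, φ (Xs 0 ω) ∂P = (P (S ⁻¹' I)).toReal :=
    (((hid 0).comp hφ).integral_eq).trans hEφ
  have hd_ne : (P (S ⁻¹' I)).toReal ≠ 0 :=
    (ENNReal.toReal_pos hIpos.ne' (measure_ne_top P _)).ne'
  have slln1 := strong_law_ae_real (fun n ω => φ (Xs n ω) * χ (Xs n ω)) hint1 hpair1 hid1
  have slln2 := strong_law_ae_real (fun n ω => φ (Xs n ω)) hint2 hpair2 hid2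
  have hae : ∀ᵐ ω ∂P, Tendsto
      (fun N => (∑ n ∈ Finset.range N, φ (Xs n ω) * χ (Xs n ω)) /
        (∑ n ∈ Finset.range N, φ (Xs n ω))) atTop
      (𝓝 ((∫ ω, {ω' | (1 : ℝ) / 2 ≤ C ω'}.indicator (fun _ => (1 : ℝ)) ω *
          (S ⁻¹' I).indicator (fun _ => (1 : ℝ)) ω ∂P) / (P (S ⁻¹' I)).toReal)) := by
    filter_upwards [slln1, slln2] with ω h1 h2
    rw [hE1] at h1; rw [hE2] at h2
    have hdiv := h1.div h2 hd_ne
    refine hdiv.congr' ?_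
    filter_upwards [Filter.eventually_ge_atTop 1] with N hN
    have hNne : (N : ℝ) ≠ 0 := Nat.cast_ne_zero.mpr (Nat.one_le_iff_ne_zero.mp hN)
    exact div_div_div_cancel_right₀ hNne _ _
  refine tendstoInMeasure_of_tendsto_ae (fun N => ?_) hae
  exact ((Finset.measurable_sum _ (fun n _ => (hφ.comp (hXs n)).mul
    (hχ.comp (hXs n)))).div (Finset.measurable_sum _ (fun n _ =>
    hφ.comp (hXs n)))).aestronglyMeasurable
end
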